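/- Let f : ℝⁿ → ℝ be continuous and convex on the closed ball of radius ε > 0 centered at p (that is, the restriction of f to B̄(p, ε) is a convex function on that convex set). Let κ : ℝⁿ → ℝ be a nonnegative integrable function with ∫ κ = 1 whose support is contained in the closed ball B̄(0, ε/2). Then the convolution x ↦ ∫_{ℝⁿ} f(x + u)·κ(u) du is convex on the closed ball B̄(p, ε/2). -/
import Mathlib


open MeasureTheory

/-- Convolving a function that is convex on the closed ball of radius `ε`
around `p` with a probability kernel supported in the closed ball of radius `ε/2` yields a
function that is convex on the closed ball of radius `ε/2` around `p`. -/
theorem gw_convolution_convexity_preserving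
    (n : ℕ) (hn : 1 ≤ n) (ε : ℝ) (hε : 0 < ε)
    (p : EuclideanSpace ℝ (Fin n))
    (f : EuclideanSpace ℝ (Fin n) → ℝ) (hf_cont : Continuous f)
    (hf_conv : ConvexOn ℝ (Metric.closedBall p ε) f)
    (κ : EuclideanSpace ℝ (Fin n) → ℝ)
    (hκ_nonneg : ∀ u, 0 ≤ κ u)
    (hκ_int : Integrable κ)
    (hκ_mass : ∫ u, κ u = 1)
    (hκ_supp : Function.support κ ⊆ Metric.closedBall 0 (ε / 2)) :
    ConvexOn ℝ (Metric.closedBall p (ε / 2)) (fun x => ∫ u, f (x + u) * κ u) := by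
  have hmeas : ∀ x : EuclideanSpace ℝ (Fin n),
      AEStronglyMeasurable (fun u => f (x + u) * κ u) volume := fun x =>
    ((hf_cont.comp (continuous_const.add continuous_id)).aestronglyMeasurable).mul
      hκ_int.aestronglyMeasurable
  have hint : ∀ x : EuclideanSpace ℝ (Fin n), Integrable (fun u => f (x + u) * κ u) := by
    intro x
    obtain ⟨M, hM⟩ := (isCompact_closedBall (0 : EuclideanSpace ℝ (Fin n)) (ε / 2)).exists_bound_of_continuousOn
      ((hf_cont.comp (continuous_const.add continuous_id)).continuousOn)
    refine (hκ_int.const_mul M).mono (hmeas x) ?_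
    filter_upwards with u
    by_cases h : κ u = 0
    · simp [h]
    · have hu : u ∈ Metric.closedBall (0 : EuclideanSpace ℝ (Fin n)) (ε / 2) := hκ_supp h
      have h1 : ‖f (x + u)‖ ≤ M := hM u hu
      have hM0 : 0 ≤ M :=
        le_trans (norm_nonneg _) (hM 0 (Metric.mem_closedBall_self (by linarith)))
      have hk := hκ_nonneg u
      calc ‖f (x + u) * κ u‖ = ‖f (x + u)‖ * κ u := by
            rw [norm_mul, Real.norm_of_nonneg hk]
        _ ≤ M * κ u := mul_le_mul_of_nonneg_right h1 hk
        _ ≤ ‖M * κ u‖ := le_abs_self _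
  refine ⟨convex_closedBall p (ε / 2), ?_⟩
  intro x hx y hy a b ha hb hab
  simp only [smul_eq_mul]
  have key : ∀ u, f (a • x + b • y + u) * κ u
      ≤ a * (f (x + u) * κ u) + b * (f (y + u) * κ u) := by
    intro u
    by_cases h : κ u = 0
    · simp [h]
    · have hu : u ∈ Metric.closedBall (0 : EuclideanSpace ℝ (Fin n)) (ε / 2) := hκ_supp h
      have hu' : ‖u‖ ≤ ε / 2 := by simpa using hu
      have hball : ∀ z : EuclideanSpace ℝ (Fin n), z ∈ Metric.closedBall p (ε / 2) →
          z + u ∈ Metric.closedBall p ε := by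
        intro z hz
        rw [Metric.mem_closedBall] at hz ⊢
        have h2 : dist (z + u) z = ‖u‖ := by simp [dist_eq_norm]
        calc dist (z + u) p ≤ dist (z + u) z + dist z p := dist_triangle _ _ _
          _ ≤ ε / 2 + ε / 2 := by rw [h2]; linarith
          _ = ε := by ring
      have hxu := hball x hx
      have hyu := hball y hy
      have heq : a • x + b • y + u = a • (x + u) + b • (y + u) := by
        rw [smul_add, smul_add]
        have h3 : a • u + b • u = u := by rw [← add_smul, hab, one_smul]
        rw [add_add_add_comm, h3]
      have hc := hf_conv.2 hxu hyu ha hb hab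
      simp only [smul_eq_mul] at hc
      have hk := hκ_nonneg u
      calc f (a • x + b • y + u) * κ u
          = f (a • (x + u) + b • (y + u)) * κ u := by rw [heq]
        _ ≤ (a * f (x + u) + b * f (y + u)) * κ u := mul_le_mul_of_nonneg_right hc hk
        _ = a * (f (x + u) * κ u) + b * (f (y + u) * κ u) := by ring
  calc ∫ u, f (a • x + b • y + u) * κ u
      ≤ ∫ u, (a * (f (x + u) * κ u) + b * (f (y + u) * κ u)) :=
        integral_mono (hint _) (((hint x).const_mul a).add ((hint y).const_mul b)) key
    _ = (a * ∫ u, f (x + u) * κ u) + b * ∫ u, f (y + u) * κ u := by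
        rw [integral_add ((hint x).const_mul a) ((hint y).const_mul b),
          integral_const_mul, integral_const_mul]
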